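/- For every pair (f₁,f₂) ∈ ℂ[x,y]² satisfying x·∂_x f₁ + x·∂_y f₂ − f₁ = 0, there exists a unique constant c ∈ ℂ such that the pair (f₁, f₂ − c) lies in the image of the map f ↦ (x·∂_y f, −x·∂_x f); hence the first Poisson cohomology space H¹_P of the Poisson bracket {x,y} = x on ℂ[x,y] is isomorphic to ℂ. -/

import Mathlib

open MvPolynomial

/-- `ℂ[x,y]`, with `X 0 = x`, `X 1 = y`. -/
abbrev A : Type := MvPolynomial (Fin 2) ℂ

noncomputable def Lw (i : Fin 2) : A →ₗ[ℂ] A :=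
  (Finsupp.lsum ℂ fun m => (monomial m) ∘ₗ ((m i + 1 : ℂ)⁻¹ • LinearMap.id)) ∘ₗ
    (AddMonoidAlgebra.coeffLinearEquiv (R := ℂ)).toLinearMap

lemma Lw_monomial (i : Fin 2) (m : Fin 2 →₀ ℕ) (a : ℂ) :
    Lw i (monomial m a) = monomial m ((m i + 1 : ℂ)⁻¹ * a) := by
  change (Finsupp.lsum ℂ fun m => (monomial m) ∘ₗ ((m i + 1 : ℂ)⁻¹ • LinearMap.id)) (Finsupp.single m a) = _
  exact Finsupp.sum_single_index (by simp)

lemma key1 (i : Fin 2) (p : A) : pderiv i (X i * Lw i p) = p := by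
  induction p using MvPolynomial.induction_on' with
  | monomial m a =>
      rw [Lw_monomial, X, monomial_mul, pderiv_monomial]
      rw [add_tsub_cancel_left]
      congr 1
      have h0 : ((m i : ℂ) + 1) ≠ 0 := Nat.cast_add_one_ne_zero (m i)
      simp only [Finsupp.coe_add, Pi.add_apply, Finsupp.single_eq_same]
      push_cast
      rw [show (1 : ℂ) * (((m i : ℂ) + 1)⁻¹ * a) * (1 + (m i : ℂ)) = a * (((m i : ℂ) + 1)⁻¹ * ((m i : ℂ) + 1)) from by ring, inv_mul_cancel₀ h0, mul_one]
  | add p q hp hq => simp only [map_add, mul_add, hp, hq]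

lemma key2 {i j : Fin 2} (hij : i ≠ j) (p : A) :
    pderiv j (Lw i p) = Lw i (pderiv j p) := by
  induction p using MvPolynomial.induction_on' with
  | monomial m a =>
      rw [Lw_monomial, pderiv_monomial, pderiv_monomial, Lw_monomial,
        Finsupp.tsub_apply, Finsupp.single_apply, if_neg (fun h => hij h.symm)]
      congr 1
      simp only [Nat.sub_zero]
      push_cast
      ring
  | add p q hp hq => simp only [map_add, hp, hq]

lemma pderiv_comm (i j : Fin 2) (p : A) :
    pderiv i (pderiv j p) = pderiv j (pderiv i p) := by
  induction p using MvPolynomial.induction_on' with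
  | monomial m a =>
      simp only [pderiv_monomial]
      rcases eq_or_ne i j with rfl | hij
      · rfl
      · rw [Finsupp.tsub_apply, Finsupp.tsub_apply, Finsupp.single_apply, Finsupp.single_apply,
          if_neg hij, if_neg (fun h => hij h.symm), tsub_right_comm]
        congr 1
        simp only [Nat.sub_zero]
        ring
  | add p q hp hq => simp only [map_add, hp, hq]

lemma coeff_pderiv' (i : Fin 2) (m : Fin 2 →₀ ℕ) (p : A) :
    coeff m (pderiv i p) = ((m i : ℂ) + 1) * coeff (m + Finsupp.single i 1) p := by
  induction p using MvPolynomial.induction_on' with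
  | monomial s a =>
      rw [pderiv_monomial, coeff_monomial, coeff_monomial]
      by_cases hs : s = m + Finsupp.single i 1
      · subst hs
        rw [if_pos (add_tsub_cancel_right m (Finsupp.single i 1)), if_pos rfl]
        simp only [Finsupp.coe_add, Pi.add_apply, Finsupp.single_eq_same]
        push_cast
        ring
      · rw [if_neg hs]
        by_cases hsi : s i = 0
        · split <;> simp [hsi]
        · rw [if_neg, mul_zero]
          intro hc
          apply hs
          rw [← hc, tsub_add_cancel_of_le]
          exact Finsupp.single_le_iff.mpr (Nat.one_le_iff_ne_zero.mpr hsi)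
  | add p q hp hq => simp [hp, hq, mul_add]

lemma key3 (p : A) (hd : ∀ i, pderiv i p = 0) : p = C (constantCoeff p) := by
  ext m
  by_cases hm : m = 0
  · subst hm; simp [constantCoeff_eq]
  · obtain ⟨i, hi⟩ : ∃ i, m i ≠ 0 := by
      by_contra hc
      push_neg at hc
      exact hm (Finsupp.ext fun i => hc i)
    have h2 := coeff_pderiv' i (m - Finsupp.single i 1) p
    rw [hd i, coeff_zero] at h2
    have hm' : (m - Finsupp.single i 1) + Finsupp.single i 1 = m :=
      tsub_add_cancel_of_le (Finsupp.single_le_iff.mpr (Nat.one_le_iff_ne_zero.mpr hi))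
    rw [hm'] at h2
    have hne : (((m - Finsupp.single i 1 : Fin 2 →₀ ℕ) i : ℂ) + 1) ≠ 0 := Nat.cast_add_one_ne_zero _
    rw [coeff_C, if_neg (Ne.symm hm)]
    exact (mul_eq_zero.mp h2.symm).resolve_left hne

lemma cc_X0_mul (p : A) : constantCoeff (X 0 * p) = 0 := by
  rw [map_mul, constantCoeff_X, zero_mul]

/-- For every cocycle `(f₁,f₂)` of the Poisson complex of `{x,y} = x`
(i.e. `x·∂_x f₁ + x·∂_y f₂ − f₁ = 0`), there is a unique constant `c ∈ ℂ` such that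
`(f₁, f₂ − c)` lies in the image of `d⁰ : f ↦ (x·∂_y f, −x·∂_x f)`; hence `H¹_P ≅ ℂ`
for the bracket `{x,y} = x`. -/
theorem H1_P_eq_C (f₁ f₂ : A) (h : X 0 * pderiv 0 f₁ + X 0 * pderiv 1 f₂ - f₁ = 0) :
    ∃! c : ℂ, ∃ g : A, (f₁, f₂ - C c) = (X 0 * pderiv 1 g, -(X 0 * pderiv 0 g)) := by
  have h01 : (0 : Fin 2) ≠ 1 := by decide
  have h10 : (1 : Fin 2) ≠ 0 := by decide
  set q : A := pderiv 0 f₁ + pderiv 1 f₂ with hq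
  have hf₁ : f₁ = X 0 * q := by rw [hq]; linear_combination -h
  have hd : pderiv 0 f₁ = q + X 0 * pderiv 0 q := by
    rw [hf₁, pderiv_mul, pderiv_X_self, one_mul]
  have hE : X 0 * pderiv 0 q + pderiv 1 f₂ = 0 := by
    apply mul_left_cancel₀ (X_ne_zero (R := ℂ) (0 : Fin 2))
    rw [mul_zero]
    linear_combination h - X 0 * hd + hf₁
  set g₀ : A := X 1 * Lw 1 q with hg₀def
  have hg₀ : pderiv 1 g₀ = q := key1 1 q
  have hu1 : pderiv 1 (f₂ + X 0 * pderiv 0 g₀) = 0 := by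
    have hcomm : pderiv 1 (pderiv 0 g₀) = pderiv 0 q := by
      rw [pderiv_comm, hg₀]
    rw [map_add, pderiv_mul, pderiv_X_of_ne h01, zero_mul, zero_add, hcomm]
    linear_combination hE
  set v : A := Lw 0 (pderiv 0 (f₂ + X 0 * pderiv 0 g₀)) with hvdef
  have hv1 : pderiv 1 v = 0 := by
    rw [hvdef, key2 h01, pderiv_comm, hu1, map_zero, map_zero]
  have hw : pderiv 0 (X 0 * v) = pderiv 0 (f₂ + X 0 * pderiv 0 g₀) :=
    key1 0 (pderiv 0 (f₂ + X 0 * pderiv 0 g₀))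
  set r : A := (f₂ + X 0 * pderiv 0 g₀) - X 0 * v with hrdef
  have hr : r = C (constantCoeff r) := by
    apply key3
    have hp0 : pderiv 0 r = 0 := by rw [hrdef, map_sub, hw, sub_self]
    have hp1 : pderiv 1 r = 0 := by
      rw [hrdef, map_sub, hu1, pderiv_mul, pderiv_X_of_ne h01, zero_mul, zero_add,
        hv1, mul_zero, sub_zero]
    intro i
    fin_cases i
    · exact hp0
    · exact hp1
  set c : ℂ := constantCoeff (f₂ + X 0 * pderiv 0 g₀) with hcdef
  have hcr : constantCoeff r = c := by
    rw [hrdef, map_sub, cc_X0_mul, sub_zero, hcdef]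
  have hu_eq : f₂ + X 0 * pderiv 0 g₀ = C c + X 0 * v := by
    rw [← hcr]
    linear_combination hr
  have hc2 : c = constantCoeff f₂ := by
    rw [hcdef, map_add, cc_X0_mul, add_zero]
  refine ⟨c, ⟨g₀ - X 0 * Lw 0 v, ?_⟩, ?_⟩
  · have e1 : pderiv 1 (g₀ - X 0 * Lw 0 v) = q := by
      rw [map_sub, hg₀, pderiv_mul, pderiv_X_of_ne h01, zero_mul, zero_add,
        key2 h01, hv1, map_zero, mul_zero, sub_zero]
    have e0 : pderiv 0 (g₀ - X 0 * Lw 0 v) = pderiv 0 g₀ - v := by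
      rw [map_sub, key1 0 v]
    rw [Prod.mk.injEq]
    constructor
    · rw [e1, hf₁]
    · rw [e0]
      linear_combination hu_eq
  · rintro c' ⟨g, hg⟩
    rw [Prod.mk.injEq] at hg
    have h2 := hg.2
    have := congrArg constantCoeff h2
    rw [map_sub, constantCoeff_C, map_neg, cc_X0_mul, neg_zero] at this
    rw [hc2]
    linear_combination -this
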